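/- Correctness of level-(ℓ+1) signatures in the multi-hop random-oracle scheme: for every ℓ ≥ 1 and all μ, x, t_1, …, t_ℓ ∈ ZMod p, the tuple (σ_0, …, σ_{2ℓ}) defined by σ_0 = g^(μ·x·t_1⋯t_ℓ), σ_k = g^(x·t_1⋯t_{ℓ+1−k}) for 1 ≤ k ≤ ℓ, and σ_{ℓ+k} = g^(t_k) for 1 ≤ k ≤ ℓ, satisfies all the level-(ℓ+1) verification equations: e(σ_0, g) = e(g^μ, σ_1); e(σ_k, g) = e(σ_{k+1}, σ_{2ℓ−k+1}) for 1 ≤ k ≤ ℓ−1; and e(σ_ℓ, g) = e(g^x, σ_{ℓ+1}). -/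

import Mathlib

/-- Correctness of level-(ℓ+1) signatures in the multi-hop random-oracle
scheme: the tuple `σ_0 = g^(μ·x·t_1⋯t_ℓ)`, `σ_k = g^(x·t_1⋯t_{ℓ+1−k})` for
`1 ≤ k ≤ ℓ`, `σ_{ℓ+k} = g^(t_k)` for `1 ≤ k ≤ ℓ`, satisfies all the
level-(ℓ+1) verification equations. -/
theorem stmt_3 {p : ℕ} [Fact p.Prime] {G GT : Type*} [CommGroup G] [CommGroup GT]
    (g : G) (hg : orderOf g = p)
    (e : G → G → GT)
    (he : ∀ a b : ZMod p, e (g ^ (a.val)) (g ^ (b.val)) = e g g ^ ((a * b).val))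
    (ℓ : ℕ) (hℓ : 1 ≤ ℓ) (μ x : ZMod p) (t : ℕ → ZMod p)
    (σ : ℕ → G)
    (hσ0 : σ 0 = g ^ ((μ * x * ∏ i ∈ Finset.Icc 1 ℓ, t i).val))
    (hσk : ∀ k, 1 ≤ k → k ≤ ℓ →
      σ k = g ^ ((x * ∏ i ∈ Finset.Icc 1 (ℓ + 1 - k), t i).val))
    (hσt : ∀ k, 1 ≤ k → k ≤ ℓ → σ (ℓ + k) = g ^ ((t k).val)) :
    e (σ 0) g = e (g ^ (μ.val)) (σ 1) ∧
    (∀ k, 1 ≤ k → k ≤ ℓ - 1 →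
      e (σ k) g = e (σ (k + 1)) (σ (2 * ℓ - k + 1))) ∧
    e (σ ℓ) g = e (g ^ (x.val)) (σ (ℓ + 1)) := by
  haveI : Fact (1 < p) := ⟨(Fact.out : p.Prime).one_lt⟩
  have hone : g = g ^ ((1 : ZMod p).val) := by
    rw [ZMod.val_one, pow_one]
  have key : ∀ a : ZMod p, e (g ^ a.val) g = e g g ^ a.val := by
    intro a
    calc e (g ^ a.val) g = e (g ^ a.val) (g ^ ((1 : ZMod p).val)) := by rw [← hone]
    _ = e g g ^ ((a * 1).val) := he a 1
    _ = e g g ^ a.val := by rw [mul_one]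
  refine ⟨?_, ?_, ?_⟩
  · rw [hσ0, hσk 1 le_rfl hℓ, key, he, Nat.add_sub_cancel, mul_assoc]
  · intro k hk1 hk2
    have hkℓ : k ≤ ℓ := le_trans hk2 (Nat.sub_le _ _)
    have hk1ℓ : k + 1 ≤ ℓ := by omega
    have h2l : 2 * ℓ - k + 1 = ℓ + (ℓ - k + 1) := by omega
    have hsub : ℓ + 1 - (k + 1) = ℓ - k := by omega
    rw [hσk k hk1 hkℓ, hσk (k + 1) (by omega) hk1ℓ, h2l,
      hσt (ℓ - k + 1) (by omega) (by omega), key, he]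
    have hIcc : ℓ + 1 - k = (ℓ - k) + 1 := by omega
    rw [hsub, hIcc, Finset.prod_Icc_succ_top (by omega : 1 ≤ ℓ - k + 1)]
    ring_nf
  · rw [hσk ℓ hℓ le_rfl, hσt 1 le_rfl hℓ, key, he]
    simp [Nat.add_sub_cancel_left]
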